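/- Let G ⊂ ℕ^p be a finite set. Then G is a generalized polymatroid (i.e., its homogenization G^hom ⊂ ℕ^(p+1) is a base polymatroid) if and only if G satisfies both: (Exchange) for all u, v ∈ G and i ∈ [p] with u_i > v_i, either there is j with u_j < v_j such that u - e_i + e_j ∈ G and v - e_j + e_i ∈ G, or |u| > |v| and u - e_i ∈ G and v + e_i ∈ G; and (Expansion) for all u, v ∈ G with |u| < |v|, there exists j with u_j < v_j such that u + e_j ∈ G and v - e_j ∈ G. -/

import Mathlib

open Finset

/-- The `i`-th standard basis vector of `ℕ^p`. -/
def ev {p : ℕ} (i : Fin p) : Fin p → ℕ := fun k => if k = i then 1 else 0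

/-- The coordinate sum `|u|` of a lattice point. -/
def degSum {p : ℕ} (u : Fin p → ℕ) : ℕ := ∑ i, u i

/-- `step u i j = u - e_i + e_j` (truncated subtraction; used when `u i > 0`). -/
def step {p : ℕ} (u : Fin p → ℕ) (i j : Fin p) : Fin p → ℕ :=
  fun k => u k + ev j k - ev i k

/-- A (base) polymatroid: a finite homogeneous subset of `ℕ^p` satisfying the
exchange property. -/
def IsBasePolymatroid {p : ℕ} (P : Finset (Fin p → ℕ)) : Prop :=
  (∀ u ∈ P, ∀ v ∈ P, degSum u = degSum v) ∧
  (∀ u ∈ P, ∀ v ∈ P, ∀ i : Fin p, v i < u i →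
    ∃ j : Fin p, u j < v j ∧ step u i j ∈ P)

/-- `max(A) = max {|a| : a ∈ A}`. -/
def maxDeg {p : ℕ} (A : Finset (Fin p → ℕ)) : ℕ := A.sup degSum

/-- The homogenization `A^hom ⊆ ℕ^(p+1)` of a finite set `A ⊆ ℕ^p`. -/
def homog {p : ℕ} (A : Finset (Fin p → ℕ)) : Finset (Fin (p + 1) → ℕ) :=
  A.image (fun a => Fin.snoc a (maxDeg A - degSum a))

/-- A generalized polymatroid: a finite set whose homogenization is a base polymatroid. -/
def IsGPolymatroid {p : ℕ} (G : Finset (Fin p → ℕ)) : Prop :=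
  IsBasePolymatroid (homog G)

/-- The Exchange property of a generalized polymatroid. -/
def ExchangeProp {p : ℕ} (G : Finset (Fin p → ℕ)) : Prop :=
  ∀ u ∈ G, ∀ v ∈ G, ∀ i : Fin p, v i < u i →
    (∃ j : Fin p, u j < v j ∧ step u i j ∈ G ∧ step v j i ∈ G) ∨
    (degSum v < degSum u ∧ (fun k => u k - ev i k) ∈ G ∧ (fun k => v k + ev i k) ∈ G)

/-- The Expansion property of a generalized polymatroid. -/
def ExpansionProp {p : ℕ} (G : Finset (Fin p → ℕ)) : Prop :=
  ∀ u ∈ G, ∀ v ∈ G, degSum u < degSum v →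
    ∃ j : Fin p, u j < v j ∧ (fun k => u k + ev j k) ∈ G ∧ (fun k => v k - ev j k) ∈ G

section Aux

open Set

variable {q N : ℕ}

/-- The fiber of a set of pairs over a first coordinate. -/
def fib (S : Set (Fin q × Fin N)) (k : Fin q) : Set (Fin N) := {t | (k, t) ∈ S}

/-- The count vector of a set of pairs. -/
noncomputable def vecOf (S : Set (Fin q × Fin N)) : Fin q → ℕ := fun k => (fib S k).ncard

lemma fib_insert (S : Set (Fin q × Fin N)) (e : Fin q × Fin N) (k : Fin q) :
    fib (insert e S) k = if k = e.1 then insert e.2 (fib S k) else fib S k := by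
  ext t
  by_cases h : k = e.1
  · subst h
    simp [fib, Prod.ext_iff]
  · simp [fib, Prod.ext_iff, h]

lemma fib_diff (S : Set (Fin q × Fin N)) (e : Fin q × Fin N) (k : Fin q) :
    fib (S \ {e}) k = if k = e.1 then fib S k \ {e.2} else fib S k := by
  ext t
  by_cases h : k = e.1
  · subst h
    simp [fib, Prod.ext_iff]
  · simp [fib, Prod.ext_iff, h]

lemma mem_fib {S : Set (Fin q × Fin N)} {e : Fin q × Fin N} (he : e ∈ S) : e.2 ∈ fib S e.1 := by
  simpa [fib] using he

lemma vecOf_exchange {S : Set (Fin q × Fin N)} {e f : Fin q × Fin N}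
    (he : e ∈ S) (hf : f ∉ S) :
    vecOf (insert f (S \ {e})) = step (vecOf S) e.1 f.1 := by
  have he2 : e.2 ∈ fib S e.1 := mem_fib he
  funext k
  show (fib (insert f (S \ {e})) k).ncard
      = (fib S k).ncard + ev f.1 k - ev e.1 k
  rw [fib_insert, fib_diff]
  by_cases hk1 : k = f.1
  · subst hk1
    have hff : f.2 ∉ fib S f.1 := fun h => hf (by simpa [fib] using h)
    by_cases hk2 : f.1 = e.1
    · rw [hk2] at hff
      have h3 : f.2 ∉ fib S e.1 \ {e.2} := fun h => hff h.1
      have h4 := Set.ncard_diff_singleton_add_one he2 (Set.toFinite _)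
      have h5 := Set.ncard_insert_of_notMem h3 (Set.toFinite _)
      simp only [ev, if_pos rfl, hk2, ite_true]
      omega
    · have h5 := Set.ncard_insert_of_notMem hff (Set.toFinite _)
      simp only [ev, if_pos rfl, if_neg hk2, ite_true]
      omega
  · by_cases hk2 : k = e.1
    · subst hk2
      have h4 := Set.ncard_diff_singleton_add_one he2 (Set.toFinite _)
      simp only [ev, if_neg hk1, if_pos rfl, ite_true]
      omega
    · simp only [ev, if_neg hk1, if_neg hk2]
      omega

lemma ncard_val_lt {m : ℕ} (h : m ≤ N) : ({t : Fin N | t.val < m}).ncard = m := by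
  classical
  have : {t : Fin N | t.val < m} = ↑(Finset.univ.filter (fun t : Fin N => t.val < m)) := by
    ext t; simp
  rw [this, Set.ncard_coe_finset]
  have himg : (Finset.univ.filter (fun t : Fin N => t.val < m)).image Fin.val
      = Finset.range m := by
    ext a
    simp only [Finset.mem_image, Finset.mem_filter, Finset.mem_univ, true_and, Finset.mem_range]
    constructor
    · rintro ⟨t, ht, rfl⟩; exact ht
    · intro ha; exact ⟨⟨a, lt_of_lt_of_le ha h⟩, ha, rfl⟩
  have := Finset.card_image_of_injective
    (Finset.univ.filter (fun t : Fin N => t.val < m)) (Fin.val_injective)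
  rw [himg, Finset.card_range] at this
  omega

end Aux
section MatroidSymm

open Set

/-- Symmetric (simultaneous) base exchange for matroids with finite ground set. -/
lemma matroid_symm_exchange {α : Type*} {M : Matroid α} (hE : M.E.Finite)
    {B₁ B₂ : Set α} (h₁ : M.IsBase B₁) (h₂ : M.IsBase B₂) {x : α}
    (hx₁ : x ∈ B₁) (hx₂ : x ∉ B₂) :
    ∃ y, y ∈ B₂ ∧ y ∉ B₁ ∧ M.IsBase (insert y (B₁ \ {x})) ∧ M.IsBase (insert x (B₂ \ {y})) := by
  classical
  have hB₁E : B₁ ⊆ M.E := h₁.subset_ground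
  have hB₂E : B₂ ⊆ M.E := h₂.subset_ground
  have hB₂fin : B₂.Finite := hE.subset hB₂E
  have hB₁fin : B₁.Finite := hE.subset hB₁E
  have hxE : x ∈ M.E := hB₁E hx₁
  have hd₁E : B₁ \ {x} ⊆ M.E := diff_subset.trans hB₁E
  -- minimal (by cardinality) subset S of B₂ whose closure contains x
  set P := hB₂fin.toFinset.powerset.filter (fun S : Finset α => x ∈ M.closure ↑S) with hP
  have hPne : P.Nonempty := by
    refine ⟨hB₂fin.toFinset, Finset.mem_filter.2 ⟨Finset.mem_powerset.2 le_rfl, ?_⟩⟩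
    rw [Set.Finite.coe_toFinset, h₂.closure_eq]
    exact hxE
  obtain ⟨S, hSP, hSmin⟩ := P.exists_min_image Finset.card hPne
  have hS₂ : (↑S : Set α) ⊆ B₂ := by
    have := (Finset.mem_filter.1 hSP).1
    rw [Finset.mem_powerset] at this
    intro z hz
    have := this hz
    rwa [Set.Finite.mem_toFinset] at this
  have hxclS : x ∈ M.closure ↑S := (Finset.mem_filter.1 hSP).2
  have hxniB₁ : x ∉ M.closure (B₁ \ {x}) := h₁.indep.notMem_closure_diff_of_mem hx₁
  -- find y ∈ S with y ∉ cl(B₁ \ {x})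
  have hyex : ∃ y ∈ S, y ∉ M.closure (B₁ \ {x}) := by
    by_contra hcon
    push_neg at hcon
    have hsub : (↑S : Set α) ⊆ M.closure (B₁ \ {x}) := fun z hz => hcon z (by exact_mod_cast hz)
    exact hxniB₁ (Matroid.closure_subset_closure_of_subset_closure hsub hxclS)
  obtain ⟨y, hyS, hycl⟩ := hyex
  have hy₂ : y ∈ B₂ := hS₂ hyS
  have hy₁ : y ∉ B₁ := by
    intro hy₁
    have hyne : y ≠ x := by rintro rfl; exact hx₂ hy₂
    exact hycl (M.subset_closure (B₁ \ {x}) hd₁E ⟨hy₁, hyne⟩)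
  have hyE : y ∈ M.E := hB₂E hy₂
  -- B₁ - x + y is a base
  have hind : M.Indep (B₁ \ {x}) := h₁.indep.subset diff_subset
  have hynd : y ∉ B₁ \ {x} := fun h => hy₁ h.1
  have hT₁indep : M.Indep (insert y (B₁ \ {x})) := by
    rw [hind.insert_indep_iff_of_notMem hynd]
    exact ⟨hyE, hycl⟩
  have hxex : x ∈ M.closure (insert y (B₁ \ {x})) := by
    have h1 : y ∈ M.closure (insert x (B₁ \ {x})) \ M.closure (B₁ \ {x}) := by
      rw [Set.insert_diff_singleton, Set.insert_eq_of_mem hx₁, h₁.closure_eq]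
      exact ⟨hyE, hycl⟩
    exact (Matroid.closure_exchange h1).1
  have hT₁E : insert y (B₁ \ {x}) ⊆ M.E := Set.insert_subset hyE hd₁E
  have hT₁span : M.Spanning (insert y (B₁ \ {x})) := by
    refine ⟨?_, hT₁E⟩
    refine subset_antisymm (M.closure_subset_ground _) ?_
    have hB₁sub : B₁ ⊆ M.closure (insert y (B₁ \ {x})) := by
      intro z hz
      by_cases hzx : z = x
      · subst hzx; exact hxex
      · exact M.subset_closure _ hT₁E (Set.mem_insert_of_mem _ ⟨hz, hzx⟩)
    calc M.E = M.closure B₁ := h₁.closure_eq.symm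
      _ ⊆ M.closure (M.closure (insert y (B₁ \ {x}))) :=
          M.closure_subset_closure hB₁sub
      _ = M.closure (insert y (B₁ \ {x})) := M.closure_closure _
  have hT₁ : M.IsBase (insert y (B₁ \ {x})) := hT₁indep.isBase_of_spanning hT₁span
  -- B₂ + x - y is a base
  have hxclSy : x ∉ M.closure ↑(S.erase y) := by
    intro hcon
    have hmem : S.erase y ∈ P := by
      refine Finset.mem_filter.2 ⟨Finset.mem_powerset.2 ?_, hcon⟩
      exact (Finset.erase_subset _ _).trans (Finset.mem_powerset.1 (Finset.mem_filter.1 hSP).1)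
    have h1 := hSmin _ hmem
    have h2 := Finset.card_erase_lt_of_mem hyS
    omega
  have hycl₂ : y ∈ M.closure (insert x ↑(S.erase y)) := by
    have h1 : x ∈ M.closure (insert y ↑(S.erase y)) \ M.closure ↑(S.erase y) := by
      constructor
      · have : (insert y ↑(S.erase y) : Set α) = ↑S := by
          rw [← Finset.coe_insert, Finset.insert_erase hyS]
        rwa [this]
      · exact hxclSy
    exact (Matroid.closure_exchange h1).1
  have hT₂E : insert x (B₂ \ {y}) ⊆ M.E := Set.insert_subset hxE (diff_subset.trans hB₂E)
  have hT₂span : M.Spanning (insert x (B₂ \ {y})) := by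
    have hsub : insert x ↑(S.erase y) ⊆ insert x (B₂ \ {y}) := by
      refine Set.insert_subset_insert ?_
      intro z hz
      rw [Finset.coe_erase, Set.mem_diff] at hz
      exact ⟨hS₂ hz.1, hz.2⟩
    have hyT₂ : y ∈ M.closure (insert x (B₂ \ {y})) :=
      M.closure_subset_closure hsub hycl₂
    have hB₂sub : B₂ ⊆ M.closure (insert x (B₂ \ {y})) := by
      intro z hz
      by_cases hzy : z = y
      · subst hzy; exact hyT₂
      · exact M.subset_closure _ hT₂E (Set.mem_insert_of_mem _ ⟨hz, hzy⟩)
    refine ⟨?_, hT₂E⟩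
    refine subset_antisymm (M.closure_subset_ground _) ?_
    calc M.E = M.closure B₂ := h₂.closure_eq.symm
      _ ⊆ M.closure (M.closure (insert x (B₂ \ {y}))) :=
          M.closure_subset_closure hB₂sub
      _ = M.closure (insert x (B₂ \ {y})) := M.closure_closure _
  obtain ⟨B₄, hB₄, hB₄sub⟩ := hT₂span.exists_isBase_subset
  have hxnd : x ∉ B₂ \ {y} := fun h => hx₂ h.1
  have hT₂fin : (insert x (B₂ \ {y})).Finite := (hB₂fin.subset diff_subset).insert x
  have hcard : (insert x (B₂ \ {y})).encard ≤ B₄.encard := by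
    rw [Set.encard_insert_of_notMem hxnd, hB₄.encard_eq_encard_of_isBase h₂,
      ← Set.encard_diff_singleton_add_one hy₂]
  have hT₂eq : B₄ = insert x (B₂ \ {y}) := hT₂fin.eq_of_subset_of_encard_le' hB₄sub hcard
  exact ⟨y, hy₂, hy₁, hT₁, hT₂eq ▸ hB₄⟩

end MatroidSymm
section VecSymm

open Set

/-- One-sided exchange implies symmetric exchange for homogeneous finite sets of
lattice points (Brualdi/Murota), via a matroid encoding. -/
theorem vec_symm_exchange {q : ℕ} {B : Finset (Fin q → ℕ)} {N : ℕ}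
    (hdeg : ∀ b ∈ B, degSum b = N)
    (hex : ∀ u ∈ B, ∀ v ∈ B, ∀ i : Fin q, v i < u i →
      ∃ j : Fin q, u j < v j ∧ step u i j ∈ B)
    {b c : Fin q → ℕ} (hb : b ∈ B) (hc : c ∈ B) {i : Fin q} (hlt : c i < b i) :
    ∃ j : Fin q, b j < c j ∧ step b i j ∈ B ∧ step c j i ∈ B := by
  classical
  have hle : ∀ a ∈ B, ∀ k, a k ≤ N := by
    intro a ha k
    rw [← hdeg a ha]
    exact Finset.single_le_sum (f := a) (fun _ _ => Nat.zero_le _) (Finset.mem_univ k)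
  -- the base family on Fin q × Fin N
  set Bse : Set (Fin q × Fin N) → Prop := fun S => vecOf S ∈ B with hBse
  -- realization of a vector
  have hvecD : ∀ a ∈ B, vecOf {e : Fin q × Fin N | e.2.val < a e.1} = a := by
    intro a ha
    funext k
    have : fib {e : Fin q × Fin N | e.2.val < a e.1} k = {t : Fin N | t.val < a k} := rfl
    rw [vecOf, this, ncard_val_lt (hle a ha k)]
  -- exchange property
  have hexch : Matroid.ExchangeProperty Bse := by
    rintro X Y hX hY e ⟨heX, heY⟩
    have he2 : e.2 ∈ fib X e.1 := mem_fib heX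
    by_cases hcase : vecOf Y e.1 < vecOf X e.1
    · obtain ⟨j, hj, hstep⟩ := hex _ hX _ hY e.1 hcase
      have hnsub : ¬ (fib Y j ⊆ fib X j) := by
        intro hsub
        have := Set.ncard_le_ncard hsub (toFinite _)
        have h1 : vecOf X j < vecOf Y j := hj
        simp only [vecOf] at h1
        omega
      obtain ⟨s, hsY, hsX⟩ := Set.not_subset.1 hnsub
      have hfX : (j, s) ∉ X := hsX
      refine ⟨(j, s), ⟨hsY, hfX⟩, ?_⟩
      show vecOf _ ∈ B
      rw [vecOf_exchange heX hfX]
      exact hstep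
    · push_neg at hcase
      have hnsub : ¬ (fib Y e.1 ⊆ fib X e.1 \ {e.2}) := by
        intro hsub
        have h1 := Set.ncard_le_ncard hsub (toFinite _)
        have h2 := Set.ncard_diff_singleton_add_one he2 (toFinite _)
        have h3 : vecOf X e.1 ≤ vecOf Y e.1 := hcase
        simp only [vecOf] at h3
        omega
      obtain ⟨s, hsY, hs⟩ := Set.not_subset.1 hnsub
      have hsne : s ≠ e.2 := by
        rintro rfl
        exact heY (by simpa [fib] using hsY)
      have hsX : (e.1, s) ∉ X := fun hmem => hs ⟨hmem, hsne⟩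
      refine ⟨(e.1, s), ⟨hsY, hsX⟩, ?_⟩
      show vecOf _ ∈ B
      rw [vecOf_exchange heX hsX]
      have : step (vecOf X) e.1 e.1 = vecOf X := by
        funext k; simp [step]
      rwa [this]
  -- the matroid
  set Db : Set (Fin q × Fin N) := {e : Fin q × Fin N | e.2.val < b e.1} with hDb
  set Dc : Set (Fin q × Fin N) := {e : Fin q × Fin N | e.2.val < c e.1} with hDc
  have hDbB : Bse Db := by show vecOf Db ∈ B; rw [hvecD b hb]; exact hb
  have hDcB : Bse Dc := by show vecOf Dc ∈ B; rw [hvecD c hc]; exact hc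
  set M : Matroid (Fin q × Fin N) := Matroid.ofExistsFiniteIsBase Set.univ Bse
    ⟨Db, hDbB, Set.toFinite _⟩ hexch (fun _ _ => Set.subset_univ _) with hM
  have hMBase : ∀ S, M.IsBase S ↔ Bse S := fun S => Iff.rfl
  have hME : M.E.Finite := Set.toFinite _
  have hciN : c i < N := lt_of_lt_of_le hlt (hle b hb i)
  set x : Fin q × Fin N := (i, ⟨c i, hciN⟩) with hx
  have hx₁ : x ∈ Db := by show (c i) < b i; exact hlt
  have hx₂ : x ∉ Dc := by show ¬ ((c i) < c i); omega
  obtain ⟨y, hy₂, hy₁, hT₁, hT₂⟩ := matroid_symm_exchange hME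
    ((hMBase Db).2 hDbB) ((hMBase Dc).2 hDcB) hx₁ hx₂
  have hyc : y.2.val < c y.1 := hy₂
  have hyb : ¬ (y.2.val < b y.1) := hy₁
  have hjlt : b y.1 < c y.1 := by omega
  refine ⟨y.1, hjlt, ?_, ?_⟩
  · have h1 : Bse (insert y (Db \ {x})) := (hMBase _).1 hT₁
    rw [hBse] at h1
    rw [vecOf_exchange hx₁ hy₁, hvecD b hb] at h1
    exact h1
  · have h2 : Bse (insert x (Dc \ {y})) := (hMBase _).1 hT₂
    rw [hBse] at h2
    rw [vecOf_exchange hy₂ hx₂, hvecD c hc] at h2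
    exact h2

end VecSymm
section Bridge

variable {p : ℕ}

lemma degSum_snoc (a : Fin p → ℕ) (t : ℕ) : degSum (Fin.snoc a t) = degSum a + t := by
  simp [degSum, Fin.sum_univ_castSucc]

lemma degSum_le_maxDeg {G : Finset (Fin p → ℕ)} {a : Fin p → ℕ} (ha : a ∈ G) :
    degSum a ≤ maxDeg G := Finset.le_sup (f := degSum) ha

lemma mem_homog {G : Finset (Fin p → ℕ)} {a : Fin p → ℕ} (ha : a ∈ G) :
    Fin.snoc a (maxDeg G - degSum a) ∈ homog G := Finset.mem_image_of_mem _ ha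

lemma init_mem_of_snoc_mem_homog {G : Finset (Fin p → ℕ)} {a : Fin p → ℕ} {t : ℕ}
    (h : Fin.snoc a t ∈ homog G) : a ∈ G := by
  obtain ⟨a', ha', heq⟩ := Finset.mem_image.1 h
  have : a' = a := by
    have h2 := congrArg Fin.init heq
    rwa [Fin.init_snoc, Fin.init_snoc] at h2
  rwa [this] at ha'

lemma ev_castSucc_castSucc (i k : Fin p) : ev i.castSucc k.castSucc = ev i k := by
  simp [ev, Fin.castSucc_inj]

lemma ev_castSucc_last (i : Fin p) : ev i.castSucc (Fin.last p) = 0 := by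
  simp only [ev, if_neg (Fin.castSucc_lt_last i).ne']

lemma ev_last_castSucc (k : Fin p) : ev (Fin.last p) k.castSucc = 0 := by
  simp only [ev, if_neg (Fin.castSucc_lt_last k).ne]

lemma ev_last_last : ev (Fin.last p) (Fin.last p) = 1 := by simp [ev]

lemma step_snoc_cc (u : Fin p → ℕ) (s : ℕ) (i j : Fin p) :
    step (Fin.snoc u s) i.castSucc j.castSucc = Fin.snoc (step u i j) s := by
  funext k
  induction k using Fin.lastCases with
  | last => simp [step, ev_castSucc_last]
  | cast k => simp [step, ev_castSucc_castSucc]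

lemma step_snoc_cl (u : Fin p → ℕ) (s : ℕ) (i : Fin p) :
    step (Fin.snoc u s) i.castSucc (Fin.last p) = Fin.snoc (fun k => u k - ev i k) (s + 1) := by
  funext k
  induction k using Fin.lastCases with
  | last => simp [step, ev_castSucc_last, ev_last_last]
  | cast k => simp [step, ev_castSucc_castSucc, ev_last_castSucc]

lemma step_snoc_lc (u : Fin p → ℕ) (s : ℕ) (j : Fin p) :
    step (Fin.snoc u s) (Fin.last p) j.castSucc = Fin.snoc (fun k => u k + ev j k) (s - 1) := by
  funext k
  induction k using Fin.lastCases with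
  | last => simp [step, ev_castSucc_last, ev_last_last]
  | cast k => simp [step, ev_castSucc_castSucc, ev_last_castSucc]

lemma degSum_ev (i : Fin p) : degSum (ev i) = 1 := by
  simp [degSum, ev]

lemma degSum_add_ev (u : Fin p → ℕ) (j : Fin p) :
    degSum (fun k => u k + ev j k) = degSum u + 1 := by
  simp [degSum, Finset.sum_add_distrib, ev]

lemma degSum_sub_ev {u : Fin p → ℕ} {i : Fin p} (h : 1 ≤ u i) :
    degSum (fun k => u k - ev i k) = degSum u - 1 := by
  unfold degSum
  rw [Finset.sum_tsub_distrib]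
  · congr 1
    simp [ev]
  · intro k _
    by_cases hk : k = i
    · subst hk; simpa [ev] using h
    · simp [ev, hk]

lemma degSum_step {u : Fin p → ℕ} {i : Fin p} (h : 1 ≤ u i) (j : Fin p) :
    degSum (step u i j) = degSum u := by
  unfold degSum step
  rw [Finset.sum_tsub_distrib]
  · have h1 : ∑ k, (u k + ev j k) = (∑ k, u k) + 1 := by
      simp [Finset.sum_add_distrib, ev]
    have h2 : ∑ k, ev i k = 1 := by simp [ev]
    rw [h1, h2]
    omega
  · intro k _
    by_cases hk : k = i
    · subst hk
      have : (1 : ℕ) ≤ u k + ev j k := le_trans h (Nat.le_add_right _ _)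
      simpa [ev] using this
    · simp [ev, hk]

lemma degSum_mem_homog {G : Finset (Fin p → ℕ)} {w : Fin (p + 1) → ℕ}
    (hw : w ∈ homog G) : degSum w = maxDeg G := by
  obtain ⟨a, ha, rfl⟩ := Finset.mem_image.1 hw
  rw [degSum_snoc]
  have := degSum_le_maxDeg ha
  omega

end Bridge

/-- A finite set `G ⊆ ℕ^p` is a generalized polymatroid (its homogenization is a base
polymatroid) if and only if it satisfies the Exchange and Expansion properties. -/
theorem isGPolymatroid_iff_exchange_and_expansion {p : ℕ} (G : Finset (Fin p → ℕ)) :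
    IsGPolymatroid G ↔ ExchangeProp G ∧ ExpansionProp G := by
  constructor
  · rintro ⟨-, hex⟩
    have hdeg : ∀ w ∈ homog G, degSum w = maxDeg G := fun w hw => degSum_mem_homog hw
    constructor
    · -- Exchange
      intro u hu v hv i hi
      have hU := mem_homog hu
      have hV := mem_homog hv
      have hdu := degSum_le_maxDeg hu
      have hdv := degSum_le_maxDeg hv
      have hlt' : (Fin.snoc v (maxDeg G - degSum v) : Fin (p + 1) → ℕ) i.castSucc
          < (Fin.snoc u (maxDeg G - degSum u) : Fin (p + 1) → ℕ) i.castSucc := by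
        simpa [Fin.snoc_castSucc] using hi
      obtain ⟨j', hj', h1, h2⟩ := vec_symm_exchange hdeg hex hU hV hlt'
      rcases Fin.eq_castSucc_or_eq_last j' with ⟨j, rfl⟩ | rfl
      · left
        rw [Fin.snoc_castSucc, Fin.snoc_castSucc] at hj'
        rw [step_snoc_cc] at h1
        rw [step_snoc_cc] at h2
        exact ⟨j, hj', init_mem_of_snoc_mem_homog h1, init_mem_of_snoc_mem_homog h2⟩
      · right
        rw [Fin.snoc_last, Fin.snoc_last] at hj'
        rw [step_snoc_cl] at h1
        rw [step_snoc_lc] at h2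
        exact ⟨by omega, init_mem_of_snoc_mem_homog h1, init_mem_of_snoc_mem_homog h2⟩
    · -- Expansion
      intro u hu v hv hi
      have hU := mem_homog hu
      have hV := mem_homog hv
      have hdu := degSum_le_maxDeg hu
      have hdv := degSum_le_maxDeg hv
      have hlt' : (Fin.snoc v (maxDeg G - degSum v) : Fin (p + 1) → ℕ) (Fin.last p)
          < (Fin.snoc u (maxDeg G - degSum u) : Fin (p + 1) → ℕ) (Fin.last p) := by
        rw [Fin.snoc_last, Fin.snoc_last]
        omega
      obtain ⟨j', hj', h1, h2⟩ := vec_symm_exchange hdeg hex hU hV hlt'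
      rcases Fin.eq_castSucc_or_eq_last j' with ⟨j, rfl⟩ | rfl
      · rw [Fin.snoc_castSucc, Fin.snoc_castSucc] at hj'
        rw [step_snoc_lc] at h1
        rw [step_snoc_cl] at h2
        exact ⟨j, hj', init_mem_of_snoc_mem_homog h1, init_mem_of_snoc_mem_homog h2⟩
      · exact absurd hj' (lt_asymm hlt')
  · rintro ⟨hEx, hExp⟩
    constructor
    · intro w₁ h₁ w₂ h₂
      rw [degSum_mem_homog h₁, degSum_mem_homog h₂]
    · intro U hU V hV i hi
      obtain ⟨u, hu, rfl⟩ := Finset.mem_image.1 hU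
      obtain ⟨v, hv, rfl⟩ := Finset.mem_image.1 hV
      have hdu := degSum_le_maxDeg hu
      have hdv := degSum_le_maxDeg hv
      rcases Fin.eq_castSucc_or_eq_last i with ⟨i, rfl⟩ | rfl
      · -- i = castSucc
        rw [Fin.snoc_castSucc, Fin.snoc_castSucc] at hi
        have hui : 1 ≤ u i := by omega
        rcases hEx u hu v hv i hi with ⟨j, hj, hmem, -⟩ | ⟨hdlt, hmem, -⟩
        · refine ⟨j.castSucc, by simpa [Fin.snoc_castSucc] using hj, ?_⟩
          rw [step_snoc_cc]
          have he : maxDeg G - degSum u = maxDeg G - degSum (step u i j) := by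
            rw [degSum_step hui]
          rw [he]
          exact Finset.mem_image_of_mem _ hmem
        · refine ⟨Fin.last p, ?_, ?_⟩
          · rw [Fin.snoc_last, Fin.snoc_last]
            omega
          · rw [step_snoc_cl]
            have hd1 : 1 ≤ degSum u := by
              calc 1 ≤ u i := hui
                _ ≤ degSum u := Finset.single_le_sum (f := u)
                    (fun _ _ => Nat.zero_le _) (Finset.mem_univ i)
            have he : maxDeg G - degSum u + 1
                = maxDeg G - degSum (fun k => u k - ev i k) := by
              rw [degSum_sub_ev hui]; omega
            rw [he]
            exact Finset.mem_image_of_mem _ hmem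
      · -- i = last
        rw [Fin.snoc_last, Fin.snoc_last] at hi
        have hlt2 : degSum u < degSum v := by omega
        obtain ⟨j, hj, hjmem, -⟩ := hExp u hu v hv hlt2
        refine ⟨j.castSucc, by simpa [Fin.snoc_castSucc] using hj, ?_⟩
        rw [step_snoc_lc]
        have he : maxDeg G - degSum u - 1
            = maxDeg G - degSum (fun k => u k + ev j k) := by
          rw [degSum_add_ev]; omega
        rw [he]
        exact Finset.mem_image_of_mem _ hjmem
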